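/- If T and S are rayless trees having distinct Schmidt ranks, then T and S are not of the same topological type, i.e. it is not the case that both T ≤ S and S ≤ T. -/

import Mathlib

universe u v

/-- A topological minor embedding of `H` into `G`: an injective map `toFun` on vertices
together with, for each edge of `H`, a path in `G` joining the images of its endpoints,
such that distinct edges get internally vertex-disjoint paths whose internal vertices
avoid the image of `toFun`. -/
structure TopMinorEmb {V : Type u} {W : Type v} (H : SimpleGraph V) (G : SimpleGraph W) where
  toFun : V → W
  inj : Function.Injective toFun
  path : ∀ ⦃a b : V⦄, H.Adj a b → G.Walk (toFun a) (toFun b)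
  path_isPath : ∀ ⦃a b : V⦄ (h : H.Adj a b), (path h).IsPath
  path_symm : ∀ ⦃a b : V⦄ (h : H.Adj a b), path h.symm = (path h).reverse
  internal_avoid_image : ∀ ⦃a b : V⦄ (h : H.Adj a b) (w : W),
      w ∈ (path h).support → w ≠ toFun a → w ≠ toFun b → ∀ x : V, toFun x ≠ w
  internally_disjoint : ∀ ⦃a b a' b' : V⦄ (h : H.Adj a b) (h' : H.Adj a' b'),
      s(a, b) ≠ s(a', b') → ∀ w : W,
        w ∈ (path h).support → w ∈ (path h').support → w = toFun a ∨ w = toFun b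

/-- `H ≤ G`: some subdivision of `H` embeds as a subgraph into `G`. -/
def TopMinorLE {V : Type u} {W : Type v} (H : SimpleGraph V) (G : SimpleGraph W) : Prop :=
  Nonempty (TopMinorEmb H G)

/-- `G ≡ H`: `G` and `H` have the same topological type. -/
def TopEquiv {V : Type u} {W : Type v} (G : SimpleGraph V) (H : SimpleGraph W) : Prop :=
  TopMinorLE G H ∧ TopMinorLE H G

/-- `G` contains a ray (a one-way infinite path) as a subgraph. -/
def HasRay {V : Type u} (G : SimpleGraph V) : Prop :=
  ∃ f : ℕ → V, Function.Injective f ∧ ∀ n, G.Adj (f n) (f (n + 1))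

/-- `G` is rayless: it contains no ray as a subgraph. -/
def Rayless {V : Type u} (G : SimpleGraph V) : Prop := ¬ HasRay G

/-- Graphs (on vertex types in universe `u`), bundled with their vertex type. -/
def GraphSig := Σ V : Type u, SimpleGraph V

/-- `HasSchmidtRankAux α ⟨V, G⟩` holds iff the graph `G` has Schmidt rank `α`:
`G` has rank `0` iff it is finite, and for `α > 0`, `G` has rank `α` iff it has no
rank `< α` and there is a finite vertex set `X` such that every connected component
of `G - X` has some rank `< α`.  (For `α = 0` the clause below is equivalent to
finiteness of `G`, since no ordinal is `< 0`.) -/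
def HasSchmidtRankAux : Ordinal.{u} → GraphSig.{u} → Prop :=
  WellFounded.fix Ordinal.lt_wf fun α ih p =>
    (∀ β (hβ : β < α), ¬ ih β hβ p) ∧
    ∃ X : Set p.1, X.Finite ∧
      ∀ C : (p.2.induce Xᶜ).ConnectedComponent,
        ∃ β, ∃ hβ : β < α, ih β hβ ⟨C.supp, (p.2.induce Xᶜ).induce C.supp⟩

open SimpleGraph

section walklift
variable {V : Type*} {G : SimpleGraph V} {s : Set V}

def liftWalk :
    ∀ {u v : V} (p : G.Walk u v) (h : ∀ w ∈ p.support, w ∈ s),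
      (G.induce s).Walk ⟨u, h u p.start_mem_support⟩ ⟨v, h v p.end_mem_support⟩
  | _, _, Walk.nil, _ => Walk.nil
  | _, _, Walk.cons a p, h =>
      Walk.cons (by simpa using a) (liftWalk p fun w hw => h w (by simp [hw]))

lemma liftWalk_support_map :
    ∀ {u v : V} (p : G.Walk u v) (h : ∀ w ∈ p.support, w ∈ s),
      (liftWalk p h).support.map Subtype.val = p.support
  | _, _, Walk.nil, _ => rfl
  | _, _, Walk.cons a p, h => by
      simp [liftWalk, liftWalk_support_map p]

lemma mem_of_mem_liftWalk_support
    {u v : V} {p : G.Walk u v} {h : ∀ w ∈ p.support, w ∈ s} {w : s}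
    (hw : w ∈ (liftWalk p h).support) : (w : V) ∈ p.support := by
  rw [← liftWalk_support_map p h]
  exact List.mem_map_of_mem hw

lemma liftWalk_isPath
    {u v : V} {p : G.Walk u v} (hp : p.IsPath) (h : ∀ w ∈ p.support, w ∈ s) :
    (liftWalk p h).IsPath := by
  rw [Walk.isPath_def] at hp ⊢
  have := liftWalk_support_map p h
  exact List.Nodup.of_map Subtype.val (this ▸ hp)

lemma liftWalk_congr
    {u v : V} {p q : G.Walk u v} (hpq : p = q)
    (hp : ∀ w ∈ p.support, w ∈ s) (hq : ∀ w ∈ q.support, w ∈ s) :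
    liftWalk p hp = liftWalk q hq := by subst hpq; rfl

lemma liftWalk_append
    {u v x : V} (p : G.Walk u v) (q : G.Walk v x)
    (h : ∀ w ∈ (p.append q).support, w ∈ s) :
    liftWalk (p.append q) h =
      (liftWalk p fun w hw => h w ((Walk.mem_support_append_iff p q).2 (Or.inl hw))).append
        (liftWalk q fun w hw => h w ((Walk.mem_support_append_iff p q).2 (Or.inr hw))) := by
  induction p with
  | nil => rfl
  | cons a p ih => simp [liftWalk, Walk.cons_append, ih]

lemma liftWalk_reverse :
    ∀ {u v : V} (p : G.Walk u v) (h : ∀ w ∈ p.support, w ∈ s)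
      (h' : ∀ w ∈ p.reverse.support, w ∈ s),
      liftWalk p.reverse h' = (liftWalk p h).reverse
  | _, _, Walk.nil, _, _ => rfl
  | u, v, Walk.cons a p, h, h' => by
      have hp : ∀ w ∈ p.support, w ∈ s := fun w hw => h w (by simp [hw])
      have hmem1 : ∀ w ∈ (p.reverse.append (Walk.cons a.symm Walk.nil)).support, w ∈ s :=
        fun w hw => h' w (by rwa [Walk.reverse_cons])
      have hA : ∀ w ∈ p.reverse.support, w ∈ s :=
        fun w hw => hmem1 w ((Walk.mem_support_append_iff _ _).2 (Or.inl hw))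
      have hB : ∀ w ∈ (Walk.cons a.symm Walk.nil).support, w ∈ s :=
        fun w hw => hmem1 w ((Walk.mem_support_append_iff _ _).2 (Or.inr hw))
      have e1 : liftWalk (Walk.cons a p).reverse h' =
          liftWalk (p.reverse.append (Walk.cons a.symm Walk.nil)) hmem1 :=
        liftWalk_congr (Walk.reverse_cons a p) _ _
      have e2 : liftWalk (p.reverse.append (Walk.cons a.symm Walk.nil)) hmem1 =
          (liftWalk p.reverse hA).append (liftWalk (Walk.cons a.symm Walk.nil) hB) :=
        liftWalk_append _ _ _
      have e3 : liftWalk p.reverse hA = (liftWalk p hp).reverse := liftWalk_reverse p hp hA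
      rw [e1, e2, e3]
      exact (Walk.reverse_cons _ _).symm

lemma walk_support_mem_supp {D : G.ConnectedComponent} {z y : V} (q : G.Walk z y)
    (hz : z ∈ D.supp) : ∀ w ∈ q.support, w ∈ D.supp := by
  intro w hw
  obtain ⟨q1, _, _⟩ := Walk.mem_support_iff_exists_append.1 hw
  rw [ConnectedComponent.mem_supp_iff] at hz ⊢
  rw [← hz]
  exact ConnectedComponent.eq.2 ⟨q1.reverse⟩

end walklift

def Decomp (α : Ordinal.{u}) (p : GraphSig.{u}) : Prop :=
  ∃ X : Set p.1, X.Finite ∧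
    ∀ C : (p.2.induce Xᶜ).ConnectedComponent,
      ∃ β, β < α ∧ HasSchmidtRankAux β ⟨C.supp, (p.2.induce Xᶜ).induce C.supp⟩

lemma hasSchmidtRankAux_iff (α : Ordinal.{u}) (p : GraphSig.{u}) :
    HasSchmidtRankAux α p ↔
      (∀ β, β < α → ¬ HasSchmidtRankAux β p) ∧ Decomp α p := by
  conv_lhs => rw [HasSchmidtRankAux, WellFounded.fix_eq]
  rw [Decomp]
  simp only [exists_prop]
  rfl

lemma hasSchmidtRankAux_unique {α β : Ordinal.{u}} {p : GraphSig.{u}}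
    (hα : HasSchmidtRankAux α p) (hβ : HasSchmidtRankAux β p) : α = β := by
  rcases lt_trichotomy α β with h | h | h
  · exact absurd hα (((hasSchmidtRankAux_iff β p).1 hβ).1 α h)
  · exact h
  · exact absurd hβ (((hasSchmidtRankAux_iff α p).1 hα).1 β h)

def RankLE (α : Ordinal.{u}) (p : GraphSig.{u}) : Prop :=
  ∃ γ, γ ≤ α ∧ HasSchmidtRankAux γ p

lemma rankLE_of_decomp {α : Ordinal.{u}} {p : GraphSig.{u}} (h : Decomp α p) :
    RankLE α p := by
  have hne : Set.Nonempty {γ | Decomp γ p} := ⟨α, h⟩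
  have hmem := Ordinal.lt_wf.min_mem {γ | Decomp γ p} hne
  refine ⟨Ordinal.lt_wf.min {γ | Decomp γ p} hne, ?_, ?_⟩
  · exact le_of_not_gt fun hlt => Ordinal.lt_wf.not_lt_min _ h hlt
  · rw [hasSchmidtRankAux_iff]
    refine ⟨fun β hβ hrank => ?_, hmem⟩
    exact Ordinal.lt_wf.not_lt_min _ (((hasSchmidtRankAux_iff β p).1 hrank).2) hβ

lemma rankLE_of_topMinorEmb :
    ∀ (α : Ordinal.{u}) {V W : Type u} {H : SimpleGraph V} {G : SimpleGraph W},
      TopMinorEmb H G → RankLE α ⟨W, G⟩ → RankLE α ⟨V, H⟩ := by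
  intro α
  induction α using Ordinal.induction with
  | h α ih =>
  intro V W H G e hG
  obtain ⟨γ, hγα, hγ⟩ := hG
  obtain ⟨X, hXfin, hXc⟩ := ((hasSchmidtRankAux_iff γ _).1 hγ).2
  set φ := e.toFun with hφ
  -- the pulled-back finite separator
  set X' : Set V := {v | φ v ∈ X ∨ ∃ b, ∃ h : H.Adj v b, ∃ w,
    w ∈ (e.path h).support ∧ w ∈ X ∧ w ≠ φ v ∧ w ≠ φ b} with hX'
  have hX'fin : X'.Finite := by
    have hsub : X' ⊆ ⋃ w ∈ X, ({v | φ v = w} ∪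
        {v | ∃ b, ∃ h : H.Adj v b, w ∈ (e.path h).support ∧ w ≠ φ v ∧ w ≠ φ b}) := by
      rintro v (hv | ⟨b, h, w, hw, hwX, h1, h2⟩)
      · exact Set.mem_biUnion hv (Or.inl rfl)
      · exact Set.mem_biUnion hwX (Or.inr ⟨b, h, hw, h1, h2⟩)
    refine Set.Finite.subset (Set.Finite.biUnion hXfin fun w _ => Set.Finite.union ?_ ?_) hsub
    · exact Set.Subsingleton.finite fun a ha b hb => e.inj (ha.trans hb.symm)
    · by_cases hA : ∃ v₀, ∃ b₀, ∃ h₀ : H.Adj v₀ b₀,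
          w ∈ (e.path h₀).support ∧ w ≠ φ v₀ ∧ w ≠ φ b₀
      · obtain ⟨v₀, b₀, h₀, hw₀, hn₀, hn₀'⟩ := hA
        have hnotim : ∀ x : V, φ x ≠ w := e.internal_avoid_image h₀ w hw₀ hn₀ hn₀'
        refine Set.Finite.subset ((Set.finite_singleton b₀).insert v₀) ?_
        rintro v ⟨b, h, hw, h1, h2⟩
        by_cases hs : s(v, b) = s(v₀, b₀)
        · rcases Sym2.eq_iff.1 hs with ⟨hv, _⟩ | ⟨hv, _⟩
          · exact hv ▸ Set.mem_insert _ _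
          · exact hv ▸ Set.mem_insert_of_mem _ rfl
        · rcases e.internally_disjoint h h₀ hs w hw hw₀ with hh | hh
          · exact absurd hh h1
          · exact absurd hh h2
      · convert Set.finite_empty
        ext v
        simp only [Set.mem_setOf_eq, Set.mem_empty_iff_false, iff_false]
        rintro ⟨b, h, hw, h1, h2⟩
        exact hA ⟨v, b, h, hw, h1, h2⟩
  have key1 : ∀ v : V, v ∉ X' → φ v ∉ X := fun v hv hmem => hv (Or.inl hmem)
  have key2 : ∀ (a b : V) (h : H.Adj a b), a ∉ X' → b ∉ X' →
      ∀ w ∈ (e.path h).support, w ∈ (Xᶜ : Set W) := by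
    intro a b h ha hb w hw hwX
    by_cases h1 : w = φ a
    · exact ha (Or.inl (h1 ▸ hwX))
    · by_cases h2 : w = φ b
      · exact hb (Or.inl (h2 ▸ hwX))
      · exact ha (Or.inr ⟨b, h, w, hw, hwX, h1, h2⟩)
  apply rankLE_of_decomp
  refine ⟨X', hX'fin, ?_⟩
  intro C
  -- the map on deleted subgraphs
  set ψ : (X'ᶜ : Set V) → (Xᶜ : Set W) := fun v => ⟨φ v.1, key1 v.1 v.2⟩ with hψ
  have hsupX : ∀ (u x : (X'ᶜ : Set V)) (h : H.Adj u.1 x.1),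
      ∀ w ∈ (e.path h).support, w ∈ (Xᶜ : Set W) :=
    fun u x h => key2 u.1 x.1 h u.2 x.2
  have hreach : ∀ (u x : (X'ᶜ : Set V)), (H.induce X'ᶜ).Reachable u x →
      (G.induce Xᶜ).Reachable (ψ u) (ψ x) := by
    rintro u x ⟨p⟩
    induction p with
    | nil => exact Reachable.refl _
    | cons a p ihp =>
      exact (Reachable.mono le_rfl ⟨liftWalk (e.path a) (hsupX _ _ a)⟩).trans ihp
  obtain ⟨v₀, hv₀⟩ := C.exists_rep
  set D := (G.induce Xᶜ).connectedComponentMk (ψ v₀) with hD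
  have hmemD : ∀ v : (X'ᶜ : Set V), v ∈ C.supp → ψ v ∈ D.supp := by
    intro v hv
    rw [ConnectedComponent.mem_supp_iff] at hv ⊢
    have hr : (H.induce X'ᶜ).Reachable v v₀ := by
      rw [← hv₀] at hv
      exact ConnectedComponent.eq.1 hv
    exact ConnectedComponent.eq.2 (hreach v v₀ hr)
  obtain ⟨βD, hβD, hrankD⟩ := hXc D
  -- build the embedding of the component graph into the component of G - X
  have hemb : TopMinorEmb ((H.induce X'ᶜ).induce C.supp) ((G.induce Xᶜ).induce D.supp) := by
    refine
      { toFun := fun a => ⟨ψ a.1, hmemD a.1 a.2⟩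
        inj := ?_
        path := fun a b h =>
          liftWalk (liftWalk (e.path h) (hsupX a.1 b.1 h))
            (walk_support_mem_supp _ (hmemD a.1 a.2))
        path_isPath := ?_
        path_symm := ?_
        internal_avoid_image := ?_
        internally_disjoint := ?_ }
    · intro a b hab
      exact Subtype.ext (Subtype.ext (e.inj (congrArg (fun z => z.1.1) hab)))
    · intro a b h
      exact liftWalk_isPath (liftWalk_isPath (e.path_isPath h) _) _
    · intro a b h
      have h0 : H.Adj a.1.1 b.1.1 := h
      have h1 : H.Adj b.1.1 a.1.1 := h0.symm
      have s1 : e.path h1 = (e.path h0).reverse := e.path_symm h0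
      have hrev : ∀ w ∈ (e.path h0).reverse.support, w ∈ (Xᶜ : Set W) := fun w hw =>
        hsupX a.1 b.1 h0 w (by rwa [Walk.support_reverse, List.mem_reverse] at hw)
      have s2 : liftWalk (e.path h1) (hsupX b.1 a.1 h1) =
          (liftWalk (e.path h0) (hsupX a.1 b.1 h0)).reverse :=
        (liftWalk_congr s1 (hsupX b.1 a.1 h1) hrev).trans
          (liftWalk_reverse (e.path h0) (hsupX a.1 b.1 h0) hrev)
      have hrev2 : ∀ w ∈ (liftWalk (e.path h0) (hsupX a.1 b.1 h0)).reverse.support,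
          w ∈ D.supp := fun w hw =>
        walk_support_mem_supp _ (hmemD a.1 a.2) w
          (by rwa [Walk.support_reverse, List.mem_reverse] at hw)
      exact (liftWalk_congr s2 (walk_support_mem_supp _ (hmemD b.1 b.2)) hrev2).trans
        (liftWalk_reverse (liftWalk (e.path h0) (hsupX a.1 b.1 h0))
          (walk_support_mem_supp _ (hmemD a.1 a.2)) hrev2)
    · intro a b h w hw hne1 hne2 x hxw
      have hw2 : w.1.1 ∈ (e.path (h : H.Adj a.1.1 b.1.1)).support :=
        mem_of_mem_liftWalk_support (mem_of_mem_liftWalk_support hw)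
      have hz1 : w.1.1 ≠ φ a.1.1 := fun hh => hne1 (Subtype.ext (Subtype.ext hh.symm)).symm
      have hz2 : w.1.1 ≠ φ b.1.1 := fun hh => hne2 (Subtype.ext (Subtype.ext hh.symm)).symm
      exact e.internal_avoid_image h w.1.1 hw2 hz1 hz2 x.1.1 (congrArg (fun z => z.1.1) hxw)
    · intro a b a' b' h h' hne w hw hw'
      have hne0 : s(a.1.1, b.1.1) ≠ s(a'.1.1, b'.1.1) := by
        intro hs
        apply hne
        rcases Sym2.eq_iff.1 hs with ⟨h1, h2⟩ | ⟨h1, h2⟩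
        · rw [Sym2.eq_iff]
          exact Or.inl ⟨Subtype.ext (Subtype.ext h1), Subtype.ext (Subtype.ext h2)⟩
        · rw [Sym2.eq_iff]
          exact Or.inr ⟨Subtype.ext (Subtype.ext h1), Subtype.ext (Subtype.ext h2)⟩
      have hw2 : w.1.1 ∈ (e.path (h : H.Adj a.1.1 b.1.1)).support :=
        mem_of_mem_liftWalk_support (mem_of_mem_liftWalk_support hw)
      have hw2' : w.1.1 ∈ (e.path (h' : H.Adj a'.1.1 b'.1.1)).support :=
        mem_of_mem_liftWalk_support (mem_of_mem_liftWalk_support hw')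
      rcases e.internally_disjoint (h : H.Adj a.1.1 b.1.1) (h' : H.Adj a'.1.1 b'.1.1)
        hne0 w.1.1 hw2 hw2' with hh | hh
      · exact Or.inl (Subtype.ext (Subtype.ext hh))
      · exact Or.inr (Subtype.ext (Subtype.ext hh))
  obtain ⟨δ, hδ, hrankC⟩ := ih βD (lt_of_lt_of_le hβD hγα) hemb ⟨βD, le_rfl, hrankD⟩
  exact ⟨δ, lt_of_le_of_lt hδ (lt_of_lt_of_le hβD hγα), hrankC⟩


/-- The graph `G` has Schmidt rank `α`. -/
def HasSchmidtRank {V : Type u} (G : SimpleGraph V) (α : Ordinal.{u}) : Prop :=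
  HasSchmidtRankAux α ⟨V, G⟩

/-- Rayless trees having distinct Schmidt ranks are not of the same topological type. -/
theorem not_topEquiv_of_schmidtRank_ne {V W : Type u} {T : SimpleGraph V} {S : SimpleGraph W}
    (hT : T.IsTree) (hS : S.IsTree) (hTr : Rayless T) (hSr : Rayless S)
    {α β : Ordinal.{u}} (hα : HasSchmidtRank T α) (hβ : HasSchmidtRank S β) (hne : α ≠ β) :
    ¬ (TopMinorLE T S ∧ TopMinorLE S T) := by
  rintro ⟨⟨e1⟩, ⟨e2⟩⟩
  obtain ⟨γ1, hγ1, hr1⟩ := rankLE_of_topMinorEmb β e1 ⟨β, le_rfl, hβ⟩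
  obtain ⟨γ2, hγ2, hr2⟩ := rankLE_of_topMinorEmb α e2 ⟨α, le_rfl, hα⟩
  have e1' : γ1 = α := hasSchmidtRankAux_unique hr1 hα
  have e2' : γ2 = β := hasSchmidtRankAux_unique hr2 hβ
  exact hne (le_antisymm (e1' ▸ hγ1) (e2' ▸ hγ2))
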